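/- (Resolution vs. stability trade-off.) Under the assumptions: Ω ⊂ ℝ^n of finite measure, a^{-1}(1+|ξ|)^{-b} ≤ |γ̂(ξ)| ≤ a(1+|ξ|)^b with a ≥ 1, b > 0, radial mollifier transform φ̂(ξ) = Φ(|ξ|) with 0 ≤ Φ(t) ≤ c(1+t)^{-d}, d > b + n, and β : Ω → (0,∞). There exist constants C, B₀ > 0 depending only on a, b, c, d, n, μ(Ω) such that whenever B := α inf_{x∈Ω} β(x) ≤ B₀, the reconstruction map g ↦ f_{α,β}, f_{α,β}(x) = ∫ e^{2πix·ξ} conj(γ̂(ξ))Φ(αβ(x)|ξ|)/(|γ̂(ξ)|²+(1−Φ(αβ(x)|ξ|))²) ĝ(ξ) dξ, restricted to functions supported in Ω, satisfies ‖f_{α,β,1} − f_{α,β,2}‖_{L^p(Ω)} ≤ C B^{−n−b} ‖g₁ − g₂‖_{L^p(Ω)} for all p ∈ [1,∞]. -/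

import Mathlib

open MeasureTheory Real FourierTransform
open scoped RealInnerProductSpace ENNReal

set_option maxHeartbeats 1000000 in
/-- Resolution vs. stability trade-off: there are constants `C, B₀ > 0` depending only on
`a, b, c, d, n, μ(Ω)` such that whenever `B = α·inf_Ω β ≤ B₀`, the variable-resolution
reconstruction map `g ↦ f_{α,β}` applied to data supported in `Ω` satisfies
`‖f_{α,β,1} − f_{α,β,2}‖_{L^p(Ω)} ≤ C B^{−n−b} ‖g₁ − g₂‖_{L^p(Ω)}` for every `p ∈ [1,∞]`. -/
theorem stmt_13 (n : ℕ) (hn : 0 < n)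
    (Ω : Set (EuclideanSpace ℝ (Fin n))) (hΩ : MeasurableSet Ω) (hΩne : Ω.Nonempty)
    (hΩfin : volume Ω ≠ ⊤)
    (a b c d : ℝ) (ha : 1 ≤ a) (hb : 0 < b) (hc : 0 < c) (hd : b + (n : ℝ) < d) :
    ∃ C B₀ : ℝ, 0 < C ∧ 0 < B₀ ∧
      ∀ (γhat : EuclideanSpace ℝ (Fin n) → ℂ), Measurable γhat →
      ∀ (Φ : ℝ → ℝ), Measurable Φ →
      (∀ ξ, a⁻¹ * (1 + ‖ξ‖) ^ (-b) ≤ ‖γhat ξ‖) →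
      (∀ ξ, ‖γhat ξ‖ ≤ a * (1 + ‖ξ‖) ^ b) →
      (∀ t : ℝ, 0 ≤ t → 0 ≤ Φ t ∧ Φ t ≤ c * (1 + t) ^ (-d)) →
      ∀ (β : EuclideanSpace ℝ (Fin n) → ℝ), Measurable β → (∀ x, 0 < β x) →
      ∀ α : ℝ, 0 < α →
      0 < α * sInf (β '' Ω) → α * sInf (β '' Ω) ≤ B₀ →
      ∀ p : ℝ≥0∞, 1 ≤ p →
      ∀ g₁ g₂ : EuclideanSpace ℝ (Fin n) → ℂ,
        Integrable g₁ → Integrable g₂ →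
        (∀ x ∉ Ω, g₁ x = 0) → (∀ x ∉ Ω, g₂ x = 0) →
        eLpNorm (fun x =>
            (∫ ξ : EuclideanSpace ℝ (Fin n),
              Complex.exp (2 * (π : ℂ) * Complex.I * (⟪x, ξ⟫ : ℂ)) *
                ((starRingEnd ℂ) (γhat ξ) * ((Φ (α * β x * ‖ξ‖) : ℝ) : ℂ) /
                  ((‖γhat ξ‖ ^ 2 + (1 - Φ (α * β x * ‖ξ‖)) ^ 2 : ℝ) : ℂ)) * 𝓕 g₁ ξ) -
            (∫ ξ : EuclideanSpace ℝ (Fin n),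
              Complex.exp (2 * (π : ℂ) * Complex.I * (⟪x, ξ⟫ : ℂ)) *
                ((starRingEnd ℂ) (γhat ξ) * ((Φ (α * β x * ‖ξ‖) : ℝ) : ℂ) /
                  ((‖γhat ξ‖ ^ 2 + (1 - Φ (α * β x * ‖ξ‖)) ^ 2 : ℝ) : ℂ)) * 𝓕 g₂ ξ))
          p (volume.restrict Ω) ≤
        ENNReal.ofReal (C * (α * sInf (β '' Ω)) ^ (-(n : ℝ) - b)) *
          eLpNorm (g₁ - g₂) p (volume.restrict Ω) := by
  classical
  have hd0 : (0:ℝ) < d := by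
    have : (0:ℝ) ≤ n := Nat.cast_nonneg n
    linarith
  -- the reference integral
  set I : ℝ := ∫ ξ : EuclideanSpace ℝ (Fin n), (1 + ‖ξ‖) ^ (b - d) with hIdef
  have hIint : Integrable (fun ξ : EuclideanSpace ℝ (Fin n) => (1 + ‖ξ‖) ^ (b - d)) := by
    have hlt : ((Module.finrank ℝ (EuclideanSpace ℝ (Fin n))) : ℝ) < d - b := by
      simp only [finrank_euclideanSpace, Fintype.card_fin]
      linarith
    simpa [neg_sub] using integrable_one_add_norm (E := EuclideanSpace ℝ (Fin n)) hlt
  have hInonneg : 0 ≤ I := integral_nonneg fun ξ => Real.rpow_nonneg (by positivity) _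
  have ha0 : (0:ℝ) < a := lt_of_lt_of_le one_pos ha
  have hC : 0 < ((volume Ω).toReal + 1) * (a * c * I + 1) := by
    have h1 : (0:ℝ) ≤ (volume Ω).toReal := ENNReal.toReal_nonneg
    have h2 : (0:ℝ) ≤ a * c * I := mul_nonneg (mul_nonneg ha0.le hc.le) hInonneg
    nlinarith
  refine ⟨((volume Ω).toReal + 1) * (a * c * I + 1), 1, hC, one_pos, ?_⟩
  intro γhat hγmeas Φ hΦmeas hlow hupp hΦbd β hβmeas hβpos α hα hBpos hB1 p hp g₁ g₂ hg₁ hg₂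
    hg₁s hg₂s
  by_cases hμ0 : volume Ω = 0
  · rw [Measure.restrict_eq_zero.2 hμ0, eLpNorm_measure_zero]
    exact zero_le
  set B := α * sInf (β '' Ω) with hBdef
  have hB0 : 0 < B := hBpos
  set Δ : EuclideanSpace ℝ (Fin n) → ℂ := g₁ - g₂ with hΔdef
  have hΔint : Integrable Δ := hg₁.sub hg₂
  set L1 : ℝ := ∫ y, ‖Δ y‖ with hL1def
  have hL1nonneg : 0 ≤ L1 := integral_nonneg fun _ => norm_nonneg _
  set M : EuclideanSpace ℝ (Fin n) → ℝ :=
    fun ξ => a * c * B ^ (-b) * (1 + B * ‖ξ‖) ^ (b - d) with hMdef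
  have hMnonneg : ∀ ξ, 0 ≤ M ξ := fun ξ =>
    mul_nonneg (mul_nonneg (mul_nonneg ha0.le hc.le) (Real.rpow_nonneg hB0.le _))
      (Real.rpow_nonneg (by positivity) _)
  have hMint : Integrable M := by
    have h1 : Integrable (fun ξ : EuclideanSpace ℝ (Fin n) => (1 + ‖B • ξ‖) ^ (b - d)) :=
      hIint.comp_smul hB0.ne'
    have h2 : Integrable (fun ξ : EuclideanSpace ℝ (Fin n) => (1 + B * ‖ξ‖) ^ (b - d)) := by
      have : (fun ξ : EuclideanSpace ℝ (Fin n) => (1 + B * ‖ξ‖) ^ (b - d)) =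
          fun ξ : EuclideanSpace ℝ (Fin n) => (1 + ‖B • ξ‖) ^ (b - d) := by
        funext ξ
        rw [norm_smul, Real.norm_of_nonneg hB0.le]
      rw [this]
      exact h1
    exact h2.const_mul _
  set K : ℝ := a * c * B ^ (-(n:ℝ) - b) * I with hKdef
  have hKnonneg : 0 ≤ K :=
    mul_nonneg (mul_nonneg (mul_nonneg ha0.le hc.le) (Real.rpow_nonneg hB0.le _)) hInonneg
  have hMeq : ∫ ξ, M ξ = K := by
    have hscale : (∫ ξ : EuclideanSpace ℝ (Fin n), (1 + B * ‖ξ‖) ^ (b - d)) = (B ^ n)⁻¹ * I := by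
      have hcomp : (fun ξ : EuclideanSpace ℝ (Fin n) => (1 + B * ‖ξ‖) ^ (b - d)) =
          fun ξ : EuclideanSpace ℝ (Fin n) =>
            (fun η : EuclideanSpace ℝ (Fin n) => (1 + ‖η‖) ^ (b - d)) (B • ξ) := by
        funext ξ
        simp only [norm_smul, Real.norm_of_nonneg hB0.le]
      rw [hcomp, Measure.integral_comp_smul_of_nonneg (μ := volume)
        (fun η : EuclideanSpace ℝ (Fin n) => (1 + ‖η‖) ^ (b - d)) B (hR := hB0.le)]
      simp [finrank_euclideanSpace, smul_eq_mul, hIdef]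
    simp only [hMdef]
    rw [MeasureTheory.integral_const_mul, hscale, hKdef]
    rw [show (-(n:ℝ) - b) = (-b) + (-(n:ℝ)) by ring, Real.rpow_add hB0,
      Real.rpow_neg hB0.le ((n:ℝ)), Real.rpow_natCast]
    ring
  -- Fourier transform facts
  have h𝓕sub : ∀ ξ, 𝓕 g₁ ξ - 𝓕 g₂ ξ = 𝓕 Δ ξ := by
    intro ξ
    simp only [Real.fourier_eq]
    rw [← integral_sub ((Real.fourierIntegral_convergent_iff ξ).2 hg₁)
      ((Real.fourierIntegral_convergent_iff ξ).2 hg₂)]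
    congr 1; ext v; simp [hΔdef, smul_sub]
  have h𝓕Δbd : ∀ ξ, ‖𝓕 Δ ξ‖ ≤ L1 := fun ξ =>
    VectorFourier.norm_fourierIntegral_le_integral_norm _ _ _ _ _
  -- the key pointwise bound
  have key : ∀ x, x ∈ Ω →
      ‖(∫ ξ : EuclideanSpace ℝ (Fin n),
          Complex.exp (2 * (π : ℂ) * Complex.I * (⟪x, ξ⟫ : ℂ)) *
            ((starRingEnd ℂ) (γhat ξ) * ((Φ (α * β x * ‖ξ‖) : ℝ) : ℂ) /
              ((‖γhat ξ‖ ^ 2 + (1 - Φ (α * β x * ‖ξ‖)) ^ 2 : ℝ) : ℂ)) * 𝓕 g₁ ξ) -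
        (∫ ξ : EuclideanSpace ℝ (Fin n),
          Complex.exp (2 * (π : ℂ) * Complex.I * (⟪x, ξ⟫ : ℂ)) *
            ((starRingEnd ℂ) (γhat ξ) * ((Φ (α * β x * ‖ξ‖) : ℝ) : ℂ) /
              ((‖γhat ξ‖ ^ 2 + (1 - Φ (α * β x * ‖ξ‖)) ^ 2 : ℝ) : ℂ)) * 𝓕 g₂ ξ)‖
        ≤ K * L1 := by
    intro x hx
    have ht : B ≤ α * β x := by
      rw [hBdef]
      refine mul_le_mul_of_nonneg_left ?_ hα.le
      exact csInf_le ⟨0, fun r ⟨z, _, hz⟩ => hz ▸ (hβpos z).le⟩ ⟨x, hx, rfl⟩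
    set W : EuclideanSpace ℝ (Fin n) → ℂ := fun ξ =>
      Complex.exp (2 * (π : ℂ) * Complex.I * (⟪x, ξ⟫ : ℂ)) *
        ((starRingEnd ℂ) (γhat ξ) * ((Φ (α * β x * ‖ξ‖) : ℝ) : ℂ) /
          ((‖γhat ξ‖ ^ 2 + (1 - Φ (α * β x * ‖ξ‖)) ^ 2 : ℝ) : ℂ)) with hWdef
    have hWbd : ∀ ξ, ‖W ξ‖ ≤ M ξ := by
      intro ξ
      have h1 : (0:ℝ) < 1 + ‖ξ‖ := by positivity
      have hγpos : (0:ℝ) < ‖γhat ξ‖ := lt_of_lt_of_le (by positivity) (hlow ξ)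
      obtain ⟨hφ0, hφle⟩ := hΦbd (α * β x * ‖ξ‖)
        (mul_nonneg (mul_nonneg hα.le (hβpos x).le) (norm_nonneg ξ))
      have hD0 : (0:ℝ) < ‖γhat ξ‖ ^ 2 + (1 - Φ (α * β x * ‖ξ‖)) ^ 2 :=
        add_pos_of_pos_of_nonneg (pow_pos hγpos 2) (sq_nonneg _)
      have hBξ : (0:ℝ) < 1 + B * ‖ξ‖ := by positivity
      have hexp1 : ‖Complex.exp (2 * (π : ℂ) * Complex.I * ((⟪x, ξ⟫ : ℝ) : ℂ))‖ = 1 := by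
        rw [show (2 * (π : ℂ) * Complex.I * ((⟪x, ξ⟫ : ℝ) : ℂ))
            = ((2 * π * ⟪x, ξ⟫ : ℝ) : ℂ) * Complex.I by push_cast; ring]
        rw [Complex.norm_exp_ofReal_mul_I]
      have hWnorm : ‖W ξ‖ = ‖γhat ξ‖ * Φ (α * β x * ‖ξ‖) /
          (‖γhat ξ‖ ^ 2 + (1 - Φ (α * β x * ‖ξ‖)) ^ 2) := by
        show ‖Complex.exp (2 * (π : ℂ) * Complex.I * (⟪x, ξ⟫ : ℂ)) *
          ((starRingEnd ℂ) (γhat ξ) * ((Φ (α * β x * ‖ξ‖) : ℝ) : ℂ) /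
            ((‖γhat ξ‖ ^ 2 + (1 - Φ (α * β x * ‖ξ‖)) ^ 2 : ℝ) : ℂ))‖ = _
        rw [norm_mul, hexp1, one_mul, norm_div, norm_mul, RCLike.norm_conj,
          Complex.norm_real, Complex.norm_real, Real.norm_of_nonneg hφ0,
          Real.norm_of_nonneg hD0.le]
      rw [hWnorm]
      have step4 : (1 + ‖ξ‖) ^ b ≤ B ^ (-b) * (1 + B * ‖ξ‖) ^ b := by
        have hB1' : B ≤ 1 := hB1
        have h2 : 1 + ‖ξ‖ ≤ B⁻¹ * (1 + B * ‖ξ‖) := by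
          have h3 : B * (1 + ‖ξ‖) ≤ 1 + B * ‖ξ‖ := by nlinarith [norm_nonneg ξ]
          calc 1 + ‖ξ‖ = B⁻¹ * (B * (1 + ‖ξ‖)) := by field_simp
            _ ≤ B⁻¹ * (1 + B * ‖ξ‖) := mul_le_mul_of_nonneg_left h3 (inv_nonneg.2 hB0.le)
        calc (1 + ‖ξ‖) ^ b ≤ (B⁻¹ * (1 + B * ‖ξ‖)) ^ b :=
              Real.rpow_le_rpow h1.le h2 hb.le
          _ = B ^ (-b) * (1 + B * ‖ξ‖) ^ b := by
              rw [Real.mul_rpow (inv_nonneg.2 hB0.le) hBξ.le, Real.inv_rpow hB0.le,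
                ← Real.rpow_neg hB0.le]
      calc ‖γhat ξ‖ * Φ (α * β x * ‖ξ‖) / (‖γhat ξ‖ ^ 2 + (1 - Φ (α * β x * ‖ξ‖)) ^ 2)
          ≤ ‖γhat ξ‖ * Φ (α * β x * ‖ξ‖) / (‖γhat ξ‖ ^ 2) :=
            div_le_div_of_nonneg_left (mul_nonneg hγpos.le hφ0) (pow_pos hγpos 2)
              (by nlinarith [sq_nonneg (1 - Φ (α * β x * ‖ξ‖))])
        _ = Φ (α * β x * ‖ξ‖) / ‖γhat ξ‖ := by
            rw [sq, mul_div_mul_left _ _ hγpos.ne']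
        _ ≤ (c * (1 + α * β x * ‖ξ‖) ^ (-d)) * (a * (1 + ‖ξ‖) ^ b) := by
            rw [div_eq_mul_inv]
            have htξ : (0:ℝ) ≤ 1 + α * β x * ‖ξ‖ := by
              nlinarith [mul_nonneg (mul_nonneg hα.le (hβpos x).le) (norm_nonneg ξ)]
            refine mul_le_mul hφle ?_ (inv_nonneg.2 hγpos.le)
              (mul_nonneg hc.le (Real.rpow_nonneg htξ _))
            calc ‖γhat ξ‖⁻¹ ≤ (a⁻¹ * (1 + ‖ξ‖) ^ (-b))⁻¹ :=
                  inv_anti₀ (by positivity) (hlow ξ)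
              _ = a * (1 + ‖ξ‖) ^ b := by
                  rw [mul_inv, inv_inv, Real.rpow_neg h1.le, inv_inv]
        _ ≤ (c * (1 + B * ‖ξ‖) ^ (-d)) * (a * (B ^ (-b) * (1 + B * ‖ξ‖) ^ b)) := by
            refine mul_le_mul ?_ (mul_le_mul_of_nonneg_left step4 ha0.le)
              (mul_nonneg ha0.le (Real.rpow_nonneg h1.le _))
              (mul_nonneg hc.le (Real.rpow_nonneg hBξ.le _))
            refine mul_le_mul_of_nonneg_left ?_ hc.le
            refine Real.rpow_le_rpow_of_nonpos hBξ ?_ (by linarith)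
            nlinarith [norm_nonneg ξ, mul_le_mul_of_nonneg_right ht (norm_nonneg ξ)]
        _ = M ξ := by
            show _ = a * c * B ^ (-b) * (1 + B * ‖ξ‖) ^ (b - d)
            rw [show b - d = b + (-d) by ring, Real.rpow_add hBξ]
            ring
    have hWmeas : Measurable W := by
      have hcont : Continuous fun ξ : EuclideanSpace ℝ (Fin n) =>
          Complex.exp (2 * (π : ℂ) * Complex.I * ((⟪x, ξ⟫ : ℝ) : ℂ)) :=
        Complex.continuous_exp.comp <| continuous_const.mul <|
          Complex.continuous_ofReal.comp (continuous_const.inner continuous_id)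
      have h1 : Measurable fun ξ : EuclideanSpace ℝ (Fin n) => Φ (α * β x * ‖ξ‖) :=
        hΦmeas.comp (measurable_const.mul measurable_norm)
      have h2 : Measurable fun ξ : EuclideanSpace ℝ (Fin n) => (starRingEnd ℂ) (γhat ξ) :=
        (RCLike.continuous_conj (K := ℂ)).measurable.comp hγmeas
      exact hcont.measurable.mul ((h2.mul (Complex.measurable_ofReal.comp h1)).div
        (Complex.measurable_ofReal.comp ((hγmeas.norm.pow measurable_const).add
          ((measurable_const.sub h1).pow measurable_const))))
    have hu : ∀ (g : EuclideanSpace ℝ (Fin n) → ℂ), Integrable g →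
        Integrable fun ξ => W ξ * 𝓕 g ξ := by
      intro g hg
      have hcont : Continuous (𝓕 g) :=
        VectorFourier.fourierIntegral_continuous Real.continuous_fourierChar continuous_inner hg
      refine (hMint.mul_const (∫ y, ‖g y‖)).mono'
        ((hWmeas.mul hcont.measurable).aestronglyMeasurable) (ae_of_all _ fun ξ => ?_)
      rw [norm_mul]
      exact mul_le_mul (hWbd ξ) (VectorFourier.norm_fourierIntegral_le_integral_norm _ _ _ _ _)
        (norm_nonneg _) (hMnonneg ξ)
    rw [← integral_sub (hu g₁ hg₁) (hu g₂ hg₂)]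
    calc ‖∫ ξ, (W ξ * 𝓕 g₁ ξ - W ξ * 𝓕 g₂ ξ)‖ ≤ ∫ ξ, M ξ * L1 := by
          refine norm_integral_le_of_norm_le (hMint.mul_const L1) (ae_of_all _ fun ξ => ?_)
          rw [← mul_sub, norm_mul, h𝓕sub ξ]
          exact mul_le_mul (hWbd ξ) (h𝓕Δbd ξ) (norm_nonneg _) (hMnonneg ξ)
      _ = K * L1 := by rw [integral_mul_const, hMeq]
  -- put everything together
  refine le_trans (eLpNorm_le_of_ae_bound (C := K * L1)
    ((ae_restrict_iff' hΩ).2 (ae_of_all _ key))) ?_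
  rw [Measure.restrict_apply_univ]
  have hL1eq : ENNReal.ofReal L1 = eLpNorm Δ 1 (volume.restrict Ω) := by
    rw [eLpNorm_one_eq_lintegral_enorm, ← ofReal_integral_norm_eq_lintegral_enorm
      hΔint.restrict]
    congr 1
    rw [hL1def]
    refine (setIntegral_eq_integral_of_forall_compl_eq_zero fun y hy => ?_).symm
    have : Δ y = 0 := by simp [hΔdef, hg₁s y hy, hg₂s y hy]
    rw [this]; simp
  have hmono : eLpNorm Δ 1 (volume.restrict Ω) ≤
      eLpNorm Δ p (volume.restrict Ω) * (volume Ω) ^ (1 - p.toReal⁻¹) := by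
    have h := eLpNorm_le_eLpNorm_mul_rpow_measure_univ (p := 1) (q := p)
      (μ := volume.restrict Ω) hp (hΔint.restrict (s := Ω)).aestronglyMeasurable
    have h2 : 1 / (1 : ℝ≥0∞).toReal - 1 / p.toReal = 1 - p.toReal⁻¹ := by norm_num
    rwa [Measure.restrict_apply_univ, h2] at h
  calc volume Ω ^ p.toReal⁻¹ * ENNReal.ofReal (K * L1)
      ≤ volume Ω ^ p.toReal⁻¹ * (ENNReal.ofReal K *
          (eLpNorm Δ p (volume.restrict Ω) * (volume Ω) ^ (1 - p.toReal⁻¹))) := by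
        rw [ENNReal.ofReal_mul hKnonneg, hL1eq]
        exact mul_le_mul_right (mul_le_mul_right hmono _) _
    _ = (volume Ω ^ p.toReal⁻¹ * volume Ω ^ (1 - p.toReal⁻¹)) * ENNReal.ofReal K *
          eLpNorm Δ p (volume.restrict Ω) := by ring
    _ = volume Ω * ENNReal.ofReal K * eLpNorm Δ p (volume.restrict Ω) := by
        rw [← ENNReal.rpow_add _ _ hμ0 hΩfin,
          show p.toReal⁻¹ + (1 - p.toReal⁻¹) = 1 by ring, ENNReal.rpow_one]
    _ ≤ ENNReal.ofReal (((volume Ω).toReal + 1) * (a * c * I + 1) * B ^ (-(n:ℝ) - b)) *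
          eLpNorm Δ p (volume.restrict Ω) := by
        refine mul_le_mul_left ?_ _
        have hreal : (volume Ω).toReal * K ≤
            ((volume Ω).toReal + 1) * (a * c * I + 1) * B ^ (-(n:ℝ) - b) := by
          rw [hKdef]
          have hT : (0:ℝ) ≤ (volume Ω).toReal := ENNReal.toReal_nonneg
          have hP : (0:ℝ) < B ^ (-(n:ℝ) - b) := Real.rpow_pos_of_pos hB0 _
          have hJ : (0:ℝ) ≤ a * c * I := mul_nonneg (mul_nonneg ha0.le hc.le) hInonneg
          nlinarith [mul_nonneg hT hP.le, mul_nonneg hJ hP.le,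
            mul_nonneg (mul_nonneg hT hJ) hP.le]
        calc volume Ω * ENNReal.ofReal K = ENNReal.ofReal ((volume Ω).toReal * K) := by
              rw [ENNReal.ofReal_mul ENNReal.toReal_nonneg, ENNReal.ofReal_toReal hΩfin]
          _ ≤ _ := ENNReal.ofReal_le_ofReal hreal
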